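/- Let n ≥ 1, let a_0(n), a_1(n) be real numbers with 2a_0(n) + a_1(n) = 1, let f : [0,1] → ℝ be continuous, and let x ∈ [0,1]. Then |K_n^{M,1}(f;x) − f(x)| ≤ |K_n(f;x) − f(x)| + |(1 + a_1(n))(1/2 − x)|·ω₁(f; 1/(n+1)). -/

import Mathlib

open scoped BigOperators
open Set Filter MeasureTheory

/-- Bernstein fundamental function `p_{n,k}` (vanishes for `k > n` since `choose = 0`). -/
noncomputable def bp (n k : ℕ) (x : ℝ) : ℝ :=
  (n.choose k : ℝ) * x ^ k * (1 - x) ^ (n - k)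

/-- Bernstein fundamental function with integer index, vanishing for negative `k`. -/
noncomputable def bpz (n : ℕ) (k : ℤ) (x : ℝ) : ℝ :=
  if 0 ≤ k then bp n k.toNat x else 0

/-- The classical Bernstein operator `B_n`. -/
noncomputable def Bern (n : ℕ) (f : ℝ → ℝ) (x : ℝ) : ℝ :=
  ∑ k ∈ Finset.range (n + 1), bp n k x * f (k / n)

/-- Modified fundamental function `p_{n,k}^{M,1}` with `a(x,n) = a1*x + a0`. -/
noncomputable def bpM1 (a0 a1 : ℝ) (n k : ℕ) (x : ℝ) : ℝ :=
  (a1 * x + a0) * bp (n - 1) k x + (a1 * (1 - x) + a0) * bpz (n - 1) ((k : ℤ) - 1) x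

/-- The modified Bernstein operator `B_n^{M,1}`. -/
noncomputable def BernM1 (a0 a1 : ℝ) (n : ℕ) (f : ℝ → ℝ) (x : ℝ) : ℝ :=
  ∑ k ∈ Finset.range (n + 1), bpM1 a0 a1 n k x * f (k / n)

/-- Second modified fundamental function `p_{n,k}^{M,2}`. -/
noncomputable def bpM2 (n k : ℕ) (x : ℝ) : ℝ :=
  ((n : ℝ) / 2 * x ^ 2 + (-1 - (n : ℝ) / 2) * x + 1) * bp (n - 2) k x
    + (n : ℝ) * x * (1 - x) * bpz (n - 2) ((k : ℤ) - 1) x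
    + ((n : ℝ) / 2 * x ^ 2 + (-(n : ℝ) / 2 + 1) * x) * bpz (n - 2) ((k : ℤ) - 2) x

/-- The second modified Bernstein operator `B_n^{M,2}`. -/
noncomputable def BernM2 (n : ℕ) (f : ℝ → ℝ) (x : ℝ) : ℝ :=
  ∑ k ∈ Finset.range (n + 1), bpM2 n k x * f (k / n)

/-- The Kantorovich operator `K_n`. -/
noncomputable def Kan (n : ℕ) (f : ℝ → ℝ) (x : ℝ) : ℝ :=
  ((n : ℝ) + 1) * ∑ k ∈ Finset.range (n + 1),
    bp n k x * ∫ t in ((k : ℝ) / (n + 1))..(((k : ℝ) + 1) / (n + 1)), f t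

/-- The modified Kantorovich operator `K_n^{M,1}`. -/
noncomputable def KanM1 (a0 a1 : ℝ) (n : ℕ) (f : ℝ → ℝ) (x : ℝ) : ℝ :=
  ((n : ℝ) + 1) * ∑ k ∈ Finset.range (n + 1),
    bpM1 a0 a1 n k x * ∫ t in ((k : ℝ) / (n + 1))..(((k : ℝ) + 1) / (n + 1)), f t

/-- The Durrmeyer operator `D_n`. -/
noncomputable def Dur (n : ℕ) (f : ℝ → ℝ) (x : ℝ) : ℝ :=
  ((n : ℝ) + 1) * ∑ k ∈ Finset.range (n + 1),
    bp n k x * ∫ t in (0:ℝ)..1, bp n k t * f t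

/-- The modified Durrmeyer operator `D_n^{M,1}`. -/
noncomputable def DurM1 (a0 a1 : ℝ) (n : ℕ) (f : ℝ → ℝ) (x : ℝ) : ℝ :=
  ((n : ℝ) + 1) * ∑ k ∈ Finset.range (n + 1),
    bpM1 a0 a1 n k x * ∫ t in (0:ℝ)..1, bp n k t * f t

/-- The genuine Bernstein–Durrmeyer operator `U_n`. -/
noncomputable def Gen (n : ℕ) (f : ℝ → ℝ) (x : ℝ) : ℝ :=
  (1 - x) ^ n * f 0 + x ^ n * f 1 +
    ((n : ℝ) - 1) * ∑ k ∈ Finset.Icc 1 (n - 1),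
      bp n k x * ∫ t in (0:ℝ)..1, bp (n - 2) (k - 1) t * f t

/-- The modified genuine Bernstein–Durrmeyer operator `U_n^{M,1}`. -/
noncomputable def GenM1 (a0 a1 : ℝ) (n : ℕ) (f : ℝ → ℝ) (x : ℝ) : ℝ :=
  (a1 * x + a0) * (1 - x) ^ (n - 1) * f 0 + (a1 * (1 - x) + a0) * x ^ (n - 1) * f 1 +
    ((n : ℝ) - 1) * ∑ k ∈ Finset.Icc 1 (n - 1),
      bpM1 a0 a1 n k x * ∫ t in (0:ℝ)..1, bp (n - 2) (k - 1) t * f t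

/-- First modulus of continuity on `[0,1]`. -/
noncomputable def omega1 (f : ℝ → ℝ) (δ : ℝ) : ℝ :=
  sSup {y | ∃ s t : ℝ, s ∈ Icc (0:ℝ) 1 ∧ t ∈ Icc (0:ℝ) 1 ∧ |s - t| ≤ δ ∧ y = |f s - f t|}

/-- Second modulus of smoothness on `[0,1]`. -/
noncomputable def omega2 (f : ℝ → ℝ) (δ : ℝ) : ℝ :=
  sSup {y | ∃ t h : ℝ, 0 < h ∧ h ≤ δ ∧ t - h ∈ Icc (0:ℝ) 1 ∧ t + h ∈ Icc (0:ℝ) 1 ∧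
    y = |f (t + h) - 2 * f t + f (t - h)|}

/-- Sup norm on `[0,1]`. -/
noncomputable def supNorm (g : ℝ → ℝ) : ℝ :=
  sSup {y | ∃ t ∈ Icc (0:ℝ) 1, y = |g t|}

lemma bp_nonneg (n k : ℕ) {x : ℝ} (hx : x ∈ Icc (0:ℝ) 1) : 0 ≤ bp n k x := by
  unfold bp
  have h0 := hx.1; have h1 := hx.2
  have : (0:ℝ) ≤ 1 - x := by linarith
  positivity

lemma bp_sum (n : ℕ) (x : ℝ) : ∑ k ∈ Finset.range (n + 1), bp n k x = 1 := by
  calc ∑ k ∈ Finset.range (n + 1), bp n k x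
      = ∑ k ∈ Finset.range (n + 1), x ^ k * (1 - x) ^ (n - k) * (n.choose k : ℝ) :=
        Finset.sum_congr rfl fun k _ => by unfold bp; ring
    _ = (x + (1 - x)) ^ n := (add_pow x (1 - x) n).symm
    _ = 1 := by norm_num

lemma bpz_coe (n j : ℕ) (x : ℝ) : bpz n ((j:ℤ)) x = bp n j x := by
  simp [bpz]

lemma bp_rec {n : ℕ} (hn : 1 ≤ n) (k : ℕ) (x : ℝ) :
    bp n k x = (1 - x) * bp (n - 1) k x + x * bpz (n - 1) ((k : ℤ) - 1) x := by
  obtain ⟨m, rfl⟩ : ∃ m, n = m + 1 := ⟨n - 1, by omega⟩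
  simp only [Nat.add_sub_cancel]
  cases k with
  | zero =>
    simp only [Nat.cast_zero, zero_sub, bpz, Int.not_le.mpr (by norm_num : (-1:ℤ) < 0),
      if_neg (by norm_num : ¬ (0:ℤ) ≤ -1)]
    simp [bp, pow_succ]
    ring
  | succ j =>
    have hz : ((j + 1 : ℕ) : ℤ) - 1 = (j : ℤ) := by push_cast; ring
    rw [hz, bpz_coe]
    rcases lt_or_ge j m with hj | hj
    · have e1 : m + 1 - (j + 1) = m - j := by omega
      have e2 : m - j = (m - (j + 1)) + 1 := by omega
      unfold bp
      rw [e1, e2, Nat.choose_succ_succ]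
      push_cast
      ring
    · rcases eq_or_lt_of_le hj with rfl | hj'
      · simp [bp, Nat.choose_self, Nat.choose_succ_self, Nat.sub_self]
        ring
      · have h1 : m < j + 1 := by omega
        have h2 : m + 1 < j + 1 + 1 := by omega
        simp [bp, Nat.choose_eq_zero_of_lt h1, Nat.choose_eq_zero_of_lt hj',
          Nat.choose_eq_zero_of_lt (by omega : m + 1 < j + 1)]

lemma omega1_spec {f : ℝ → ℝ} (hf : ContinuousOn f (Icc 0 1)) {δ : ℝ} (hδ : 0 < δ) :
    0 ≤ omega1 f δ ∧ ∀ s t : ℝ, s ∈ Icc (0:ℝ) 1 → t ∈ Icc (0:ℝ) 1 → |s - t| ≤ δ →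
      |f s - f t| ≤ omega1 f δ := by
  obtain ⟨M, hM⟩ := (isCompact_Icc (a := (0:ℝ)) (b := 1)).exists_bound_of_continuousOn hf
  have hbdd : BddAbove {y | ∃ s t : ℝ, s ∈ Icc (0:ℝ) 1 ∧ t ∈ Icc (0:ℝ) 1 ∧ |s - t| ≤ δ ∧
      y = |f s - f t|} := by
    refine ⟨2 * M, ?_⟩
    rintro y ⟨s, t, hs, ht, -, rfl⟩
    have h1 := hM s hs
    have h2 := hM t ht
    rw [Real.norm_eq_abs] at h1 h2
    calc |f s - f t| ≤ |f s| + |f t| := abs_sub _ _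
      _ ≤ 2 * M := by linarith
  have hmem : ∀ s t : ℝ, s ∈ Icc (0:ℝ) 1 → t ∈ Icc (0:ℝ) 1 → |s - t| ≤ δ →
      |f s - f t| ≤ omega1 f δ := fun s t hs ht hst =>
    le_csSup hbdd ⟨s, t, hs, ht, hst, rfl⟩
  refine ⟨?_, hmem⟩
  have := hmem 0 0 ⟨le_refl 0, zero_le_one⟩ ⟨le_refl 0, zero_le_one⟩ (by simpa using hδ.le)
  simpa using this

lemma key_int {f : ℝ → ℝ} (hf : ContinuousOn f (Icc 0 1)) (n k : ℕ) (hk : k < n) :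
    |(∫ t in ((k:ℝ) / ((n:ℝ) + 1))..(((k:ℝ) + 1) / ((n:ℝ) + 1)), f t)
      - ∫ t in (((k:ℝ) + 1) / ((n:ℝ) + 1))..(((k:ℝ) + 1 + 1) / ((n:ℝ) + 1)), f t|
      ≤ omega1 f (1 / ((n:ℝ) + 1)) * (1 / ((n:ℝ) + 1)) := by
  have np : (0:ℝ) < (n:ℝ) + 1 := by positivity
  set h : ℝ := 1 / ((n:ℝ) + 1) with hh
  set a : ℝ := (k:ℝ) / ((n:ℝ) + 1) with hadef
  set b : ℝ := ((k:ℝ) + 1) / ((n:ℝ) + 1) with hbdef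
  have hab : a ≤ b := by
    rw [hadef, hbdef, div_le_div_iff₀ np np]
    nlinarith
  have hkn : (k:ℝ) + 1 ≤ (n:ℝ) := by exact_mod_cast Nat.succ_le_of_lt hk
  have ha0 : 0 ≤ a := by positivity
  have hb1 : b ≤ 1 := by
    rw [hbdef, div_le_one np]; linarith
  have hbh : b + h ≤ 1 := by
    rw [hbdef, hh, ← add_div, div_le_one np]; linarith
  have hh0 : 0 < h := by positivity
  have hsub : uIcc a b ⊆ Icc (0:ℝ) 1 := by
    rw [uIcc_of_le hab]
    exact Icc_subset_Icc ha0 hb1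
  have hsub2 : ∀ t ∈ uIcc a b, t + h ∈ Icc (0:ℝ) 1 := by
    intro t ht
    rw [uIcc_of_le hab] at ht
    constructor
    · linarith [ht.1, ha0, hh0.le]
    · linarith [ht.2]
  have int1 : IntervalIntegrable f volume a b := (hf.mono hsub).intervalIntegrable
  have int2 : IntervalIntegrable (fun t => f (t + h)) volume a b := by
    apply ContinuousOn.intervalIntegrable
    exact hf.comp ((continuous_id.add continuous_const).continuousOn) hsub2
  have shift : (∫ t in (((k:ℝ) + 1) / ((n:ℝ) + 1))..(((k:ℝ) + 1 + 1) / ((n:ℝ) + 1)), f t)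
      = ∫ t in a..b, f (t + h) := by
    rw [intervalIntegral.integral_comp_add_right (a := a) (b := b) f h]
    congr 1
    · rw [hadef, hh]; field_simp
    · rw [hbdef, hh]; field_simp
  rw [shift, ← intervalIntegral.integral_sub int1 int2]
  have hbound : ∀ t ∈ Set.uIoc a b, ‖f t - f (t + h)‖ ≤ omega1 f (1 / ((n:ℝ) + 1)) := by
    intro t ht
    rw [Set.uIoc_of_le hab] at ht
    have ht1 : t ∈ Icc (0:ℝ) 1 := ⟨le_trans ha0 ht.1.le, le_trans ht.2 hb1⟩
    have ht2 : t + h ∈ Icc (0:ℝ) 1 := hsub2 t (by rw [uIcc_of_le hab]; exact ⟨ht.1.le, ht.2⟩)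
    rw [Real.norm_eq_abs]
    apply (omega1_spec hf hh0).2 t (t + h) ht1 ht2
    rw [show t - (t + h) = -h by ring, abs_neg, abs_of_pos hh0]
  calc |∫ t in a..b, (f t - f (t + h))|
      ≤ omega1 f (1 / ((n:ℝ) + 1)) * |b - a| := by
        have := intervalIntegral.norm_integral_le_of_norm_le_const hbound
        rwa [Real.norm_eq_abs] at this
    _ = omega1 f (1 / ((n:ℝ) + 1)) * (1 / ((n:ℝ) + 1)) := by
        congr 1
        rw [hbdef, hadef, div_sub_div_same, show ((k:ℝ) + 1) - k = 1 by ring]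
        rw [abs_of_nonneg (by positivity)]

/-- pointwise estimate for the modified Kantorovich operator `K_n^{M,1}`. -/
theorem stmt8 (n : ℕ) (hn : 1 ≤ n) (a0 a1 : ℝ) (ha : 2 * a0 + a1 = 1)
    (f : ℝ → ℝ) (hf : ContinuousOn f (Icc 0 1)) (x : ℝ) (hx : x ∈ Icc (0:ℝ) 1) :
    |KanM1 a0 a1 n f x - f x| ≤
      |Kan n f x - f x| + |(1 + a1) * (1 / 2 - x)| * omega1 f (1 / ((n : ℝ) + 1)) := by
  have np : (0:ℝ) < (n:ℝ) + 1 := by positivity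
  set I : ℕ → ℝ := fun k => ∫ t in ((k:ℝ) / ((n:ℝ) + 1))..(((k:ℝ) + 1) / ((n:ℝ) + 1)), f t
    with hI
  set c : ℝ := (1 + a1) * (x - 1/2) with hc
  set ω : ℝ := omega1 f (1 / ((n:ℝ) + 1)) with hω
  have ha0 : a0 = (1 - a1) / 2 := by linarith
  -- per-term identity
  have hterm : ∀ k : ℕ, bpM1 a0 a1 n k x - bp n k x
      = c * (bp (n-1) k x - bpz (n-1) ((k:ℤ) - 1) x) := by
    intro k
    rw [bp_rec hn k x, bpM1, ha0, hc]
    ring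
  -- sums
  have hshift : ∑ k ∈ Finset.range (n+1), bpz (n-1) ((k:ℤ) - 1) x * I k
      = ∑ k ∈ Finset.range n, bp (n-1) k x * I (k+1) := by
    rw [Finset.sum_range_succ']
    have h0 : bpz (n-1) (((0:ℕ):ℤ) - 1) x = (0:ℝ) := by
      norm_num [bpz]
    rw [h0, zero_mul, add_zero]
    refine Finset.sum_congr rfl fun j _ => ?_
    have hz : (((j+1:ℕ)):ℤ) - 1 = (j:ℤ) := by push_cast; ring
    rw [hz, bpz_coe]
  have hdrop : ∑ k ∈ Finset.range (n+1), bp (n-1) k x * I k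
      = ∑ k ∈ Finset.range n, bp (n-1) k x * I k := by
    rw [Finset.sum_range_succ]
    have : bp (n-1) n x = 0 := by
      simp [bp, Nat.choose_eq_zero_of_lt (by omega : n - 1 < n)]
    rw [this, zero_mul, add_zero]
  -- main difference identity
  have hdiff : KanM1 a0 a1 n f x - Kan n f x
      = c * (((n:ℝ) + 1) * ∑ k ∈ Finset.range n, bp (n-1) k x * (I k - I (k+1))) := by
    have e1 : KanM1 a0 a1 n f x - Kan n f x
        = ((n:ℝ) + 1) * ∑ k ∈ Finset.range (n+1),
            (bpM1 a0 a1 n k x - bp n k x) * I k := by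
      rw [KanM1, Kan, ← mul_sub, ← Finset.sum_sub_distrib]
      congr 1
      exact Finset.sum_congr rfl fun k _ => by rw [sub_mul]
    rw [e1]
    have e2 : ∑ k ∈ Finset.range (n+1), (bpM1 a0 a1 n k x - bp n k x) * I k
        = c * (∑ k ∈ Finset.range (n+1), bp (n-1) k x * I k
            - ∑ k ∈ Finset.range (n+1), bpz (n-1) ((k:ℤ) - 1) x * I k) := by
      rw [← Finset.sum_sub_distrib, Finset.mul_sum]
      refine Finset.sum_congr rfl fun k _ => ?_
      rw [hterm k]
      ring
    rw [e2, hdrop, hshift, ← Finset.sum_sub_distrib]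
    have e3 : ∑ k ∈ Finset.range n, (bp (n-1) k x * I k - bp (n-1) k x * I (k+1))
        = ∑ k ∈ Finset.range n, bp (n-1) k x * (I k - I (k+1)) := by
      exact Finset.sum_congr rfl fun k _ => by ring
    rw [e3]
    ring
  -- bound on the sum
  have hω0 : 0 ≤ ω := (omega1_spec hf (by positivity)).1
  have hbnd : ∀ k ∈ Finset.range n, bp (n-1) k x * |I k - I (k+1)|
      ≤ bp (n-1) k x * (ω * (1 / ((n:ℝ) + 1))) := by
    intro k hk
    apply mul_le_mul_of_nonneg_left _ (bp_nonneg _ _ hx)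
    have := key_int hf n k (Finset.mem_range.mp hk)
    rw [hI]
    simp only
    convert this using 3
    all_goals (push_cast; rfl)
  have hsum1 : ∑ k ∈ Finset.range n, bp (n-1) k x = 1 := by
    have := bp_sum (n-1) x
    rwa [show n - 1 + 1 = n by omega] at this
  have hS : |∑ k ∈ Finset.range n, bp (n-1) k x * (I k - I (k+1))|
      ≤ ω * (1 / ((n:ℝ) + 1)) := by
    calc |∑ k ∈ Finset.range n, bp (n-1) k x * (I k - I (k+1))|
        ≤ ∑ k ∈ Finset.range n, |bp (n-1) k x * (I k - I (k+1))| :=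
          Finset.abs_sum_le_sum_abs _ _
      _ = ∑ k ∈ Finset.range n, bp (n-1) k x * |I k - I (k+1)| := by
          refine Finset.sum_congr rfl fun k _ => ?_
          rw [abs_mul, abs_of_nonneg (bp_nonneg _ _ hx)]
      _ ≤ ∑ k ∈ Finset.range n, bp (n-1) k x * (ω * (1 / ((n:ℝ) + 1))) :=
          Finset.sum_le_sum hbnd
      _ = (∑ k ∈ Finset.range n, bp (n-1) k x) * (ω * (1 / ((n:ℝ) + 1))) := by
          rw [← Finset.sum_mul]
      _ = ω * (1 / ((n:ℝ) + 1)) := by rw [hsum1, one_mul]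
  -- final assembly
  have habs : |KanM1 a0 a1 n f x - Kan n f x| ≤ |c| * ω := by
    rw [hdiff, abs_mul]
    have h1 : |((n:ℝ) + 1) * ∑ k ∈ Finset.range n, bp (n-1) k x * (I k - I (k+1))| ≤ ω := by
      rw [abs_mul, abs_of_pos np]
      calc ((n:ℝ) + 1) * |∑ k ∈ Finset.range n, bp (n-1) k x * (I k - I (k+1))|
          ≤ ((n:ℝ) + 1) * (ω * (1 / ((n:ℝ) + 1))) := mul_le_mul_of_nonneg_left hS np.le
        _ = ω := by field_simp
    exact mul_le_mul_of_nonneg_left h1 (abs_nonneg c)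
  have hceq : |(1 + a1) * (1 / 2 - x)| = |c| := by
    rw [hc, show (1 + a1) * (1 / 2 - x) = -((1 + a1) * (x - 1/2)) by ring, abs_neg]
  calc |KanM1 a0 a1 n f x - f x|
      = |(Kan n f x - f x) + (KanM1 a0 a1 n f x - Kan n f x)| := by ring_nf
    _ ≤ |Kan n f x - f x| + |KanM1 a0 a1 n f x - Kan n f x| := abs_add_le _ _
    _ ≤ |Kan n f x - f x| + |(1 + a1) * (1 / 2 - x)| * ω := by
        rw [hceq]; linarith [habs]
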